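/- (Theorem 1(iii)) In the variant of 3-bit PMRAC, suppose the average success probability attains the optimal value S_Q = 1/2 + 1/√6. Then Bob's observables are uniquely determined by the states: B_y = √(3/8)(N_y − M_y) for each y ∈ {1,2,3}. -/

import Mathlib

open Matrix
open scoped Kronecker ComplexOrder

noncomputable section

abbrev Mat2 := Matrix (Fin 2) (Fin 2) ℂ
abbrev Mat4 := Matrix (Fin 2 × Fin 2) (Fin 2 × Fin 2) ℂ

/-- The state ρ_x = (U_x ⊗ I₂) ρ (U_x ⊗ I₂)†. -/
def ρst (ρ : Mat4) (U : (Fin 3 → Fin 2) → Mat2) (x : Fin 3 → Fin 2) : Mat4 :=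
  (U x ⊗ₖ (1 : Mat2)) * ρ * (U x ⊗ₖ (1 : Mat2))ᴴ

def Mop (ρ : (Fin 3 → Fin 2) → Mat4) : Fin 3 → Mat4 :=
  ![-ρ ![0, 0, 0] - ρ ![0, 1, 1] + ρ ![1, 0, 1] + ρ ![1, 1, 0],
    -ρ ![0, 0, 0] + ρ ![0, 1, 1] - ρ ![1, 0, 1] + ρ ![1, 1, 0],
    -ρ ![0, 0, 0] + ρ ![0, 1, 1] + ρ ![1, 0, 1] - ρ ![1, 1, 0]]

def Nop (ρ : (Fin 3 → Fin 2) → Mat4) : Fin 3 → Mat4 :=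
  ![ρ ![0, 0, 1] + ρ ![0, 1, 0] - ρ ![1, 0, 0] - ρ ![1, 1, 1],
    ρ ![0, 0, 1] - ρ ![0, 1, 0] + ρ ![1, 0, 0] - ρ ![1, 1, 1],
    -ρ ![0, 0, 1] + ρ ![0, 1, 0] + ρ ![1, 0, 0] - ρ ![1, 1, 1]]

/-! ### Auxiliary: a real inner product on 4×4 complex matrices -/

/-- The real part of the Frobenius inner product. -/
def ip (A B : Mat4) : ℝ := ((Aᴴ * B).trace).re

lemma ip_comm (A B : Mat4) : ip A B = ip B A := by
  unfold ip
  rw [show Bᴴ * A = (Aᴴ * B)ᴴ by simp [Matrix.conjTranspose_mul], Matrix.trace_conjTranspose]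
  simp

lemma ip_add_left (A B C : Mat4) : ip (A + B) C = ip A C + ip B C := by
  unfold ip; rw [Matrix.conjTranspose_add, Matrix.add_mul, Matrix.trace_add]; simp

lemma ip_add_right (A B C : Mat4) : ip A (B + C) = ip A B + ip A C := by
  unfold ip; rw [Matrix.mul_add, Matrix.trace_add]; simp

lemma ip_sub_left (A B C : Mat4) : ip (A - B) C = ip A C - ip B C := by
  unfold ip; rw [Matrix.conjTranspose_sub, Matrix.sub_mul, Matrix.trace_sub]; simp

lemma ip_sub_right (A B C : Mat4) : ip A (B - C) = ip A B - ip A C := by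
  unfold ip; rw [Matrix.mul_sub, Matrix.trace_sub]; simp

lemma ip_smul_left (r : ℝ) (A B : Mat4) : ip ((r : ℂ) • A) B = r * ip A B := by
  unfold ip
  rw [Matrix.conjTranspose_smul, Matrix.smul_mul, Matrix.trace_smul]
  simp

lemma ip_smul_right (r : ℝ) (A B : Mat4) : ip A ((r : ℂ) • B) = r * ip A B := by
  unfold ip
  rw [Matrix.mul_smul, Matrix.trace_smul]
  simp

lemma ip_self_nonneg (A : Mat4) : 0 ≤ ip A A := by
  unfold ip
  rw [Matrix.trace]
  simp only [Matrix.diag_apply, Matrix.mul_apply, Matrix.conjTranspose_apply]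
  rw [Complex.re_sum]
  refine Finset.sum_nonneg fun j _ => ?_
  rw [Complex.re_sum]
  refine Finset.sum_nonneg fun i _ => ?_
  simpa [Complex.normSq_apply] using Complex.normSq_nonneg (A i j)

lemma ip_self_eq_zero {A : Mat4} (h : ip A A = 0) : A = 0 := by
  unfold ip at h
  rw [Matrix.trace] at h
  simp only [Matrix.diag_apply, Matrix.mul_apply, Matrix.conjTranspose_apply] at h
  rw [Complex.re_sum] at h
  have key : ∀ j ∈ Finset.univ, (0:ℝ) ≤ (∑ i, star (A i j) * A i j).re := by
    intro j _
    rw [Complex.re_sum]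
    refine Finset.sum_nonneg fun i _ => ?_
    simpa [Complex.normSq_apply] using Complex.normSq_nonneg (A i j)
  have h2 := (Finset.sum_eq_zero_iff_of_nonneg key).mp h
  ext i j
  have h3 := h2 j (Finset.mem_univ j)
  rw [Complex.re_sum] at h3
  have key2 : ∀ i ∈ Finset.univ, (0:ℝ) ≤ (star (A i j) * A i j).re := by
    intro i _; simpa [Complex.normSq_apply] using Complex.normSq_nonneg (A i j)
  have h4 := (Finset.sum_eq_zero_iff_of_nonneg key2).mp h3 i (Finset.mem_univ i)
  have : Complex.normSq (A i j) = 0 := by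
    simpa [Complex.normSq_apply] using h4
  simpa using Complex.normSq_eq_zero.mp this

/-! ### Kronecker / unitary helpers -/

lemma kron_conjTranspose (A B : Mat2) : (A ⊗ₖ B)ᴴ = Aᴴ ⊗ₖ Bᴴ := by
  ext ⟨i,j⟩ ⟨k,l⟩
  simp [Matrix.conjTranspose_apply, Matrix.kroneckerMap_apply]

lemma kron_unitary {A : Mat2} (hA : A ∈ Matrix.unitaryGroup (Fin 2) ℂ) :
    (A ⊗ₖ (1 : Mat2))ᴴ * (A ⊗ₖ (1 : Mat2)) = 1 := by
  rw [kron_conjTranspose, Matrix.conjTranspose_one, ← Matrix.mul_kronecker_mul]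
  have h1 : Aᴴ * A = 1 := Matrix.mem_unitaryGroup_iff'.mp hA
  rw [h1]
  simp [Matrix.one_kronecker_one]

/-! ### Spectral facts -/

lemma purity_le_one {ρ : Mat4} (hρ : ρ.PosSemidef) (hρtr : ρ.trace = 1) : ip ρ ρ ≤ 1 := by
  have hherm := hρ.1
  set W : Mat4 := (Matrix.IsHermitian.eigenvectorUnitary hherm : Mat4) with hWdef
  have hsWW : star W * W = 1 :=
    Matrix.mem_unitaryGroup_iff'.mp (Matrix.IsHermitian.eigenvectorUnitary hherm).2
  set D : Mat4 := Matrix.diagonal (RCLike.ofReal ∘ hherm.eigenvalues) with hDdef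
  have hspec : ρ = W * D * star W := hherm.spectral_theorem
  have htr2 : (ρᴴ * ρ).trace = ∑ i, ((hherm.eigenvalues i : ℂ))^2 := by
    rw [hherm.eq]
    calc (ρ * ρ).trace = ((W * D * star W) * (W * D * star W)).trace := by rw [← hspec]
      _ = (W * ((D * D) * star W)).trace := by
            rw [show (W * D * star W) * (W * D * star W) = W * (D * ((star W * W) * (D * star W))) by
              simp only [Matrix.mul_assoc], hsWW]
            simp [Matrix.mul_assoc]
      _ = (((D * D) * star W) * W).trace := Matrix.trace_mul_comm _ _
      _ = (D * D).trace := by rw [Matrix.mul_assoc, hsWW, Matrix.mul_one]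
      _ = ∑ i, ((hherm.eigenvalues i : ℂ))^2 := by
            rw [hDdef, Matrix.diagonal_mul_diagonal, Matrix.trace_diagonal]
            simp [pow_two]
  have htr1 : ∑ i, hherm.eigenvalues i = 1 := by
    have h5 : ρ.trace = ∑ i, ((hherm.eigenvalues i : ℂ)) := by
      calc ρ.trace = (W * (D * star W)).trace := by rw [hspec]; simp [Matrix.mul_assoc]
        _ = ((D * star W) * W).trace := Matrix.trace_mul_comm _ _
        _ = D.trace := by rw [Matrix.mul_assoc, hsWW, Matrix.mul_one]
        _ = ∑ i, ((hherm.eigenvalues i : ℂ)) := by rw [hDdef, Matrix.trace_diagonal]; simp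
    rw [hρtr] at h5
    have := congrArg Complex.re h5
    simpa [Complex.re_sum] using this.symm
  have hnn : ∀ i ∈ Finset.univ, (0:ℝ) ≤ hherm.eigenvalues i := fun i _ => hρ.eigenvalues_nonneg i
  have key : ∑ i, (hherm.eigenvalues i)^2 ≤ (∑ i, hherm.eigenvalues i)^2 :=
    Finset.sum_sq_le_sq_sum_of_nonneg hnn
  unfold ip
  rw [htr2]
  have h6 : ((∑ i, ((hherm.eigenvalues i : ℂ))^2)).re = ∑ i, (hherm.eigenvalues i)^2 := by
    rw [Complex.re_sum]
    congr 1; funext i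
    simp [pow_two]
  rw [h6]
  calc ∑ i, (hherm.eigenvalues i)^2 ≤ (∑ i, hherm.eigenvalues i)^2 := key
    _ = 1 := by rw [htr1]; norm_num

lemma psd_eq_conjTranspose_mul_self {P : Mat4} (hP : P.PosSemidef) : ∃ A : Mat4, P = Aᴴ * A := by
  open scoped MatrixOrder in
  obtain ⟨X, hX, -, hXX⟩ := CFC.exists_sqrt_of_isSelfAdjoint_of_quasispectrumRestricts
    hP.isHermitian.isSelfAdjoint (QuasispectrumRestricts.nnreal_of_nonneg hP.nonneg)
  exact ⟨X, by rw [← hXX, ← Matrix.star_eq_conjTranspose, hX.star_eq]⟩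

lemma ip_nonneg_of_psd {P Q : Mat4} (hP : P.PosSemidef) (hQ : Q.PosSemidef) : 0 ≤ ip P Q := by
  obtain ⟨A, hA⟩ := psd_eq_conjTranspose_mul_self hP
  obtain ⟨C, hC⟩ := psd_eq_conjTranspose_mul_self hQ
  have h1 : ip P Q = ip (C * Aᴴ) (C * Aᴴ) := by
    unfold ip
    congr 1
    rw [hA, hC]
    have e1 : (Aᴴ*A)ᴴ = Aᴴ*A := by simp [Matrix.conjTranspose_mul]
    have e2 : (C*Aᴴ)ᴴ * (C*Aᴴ) = (A*Cᴴ) * (C*Aᴴ) := by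
      simp [Matrix.conjTranspose_mul]
    rw [e1, e2]
    calc (Aᴴ*A*(Cᴴ*C)).trace = ((Cᴴ*C)*(Aᴴ*A)).trace := Matrix.trace_mul_comm _ _
      _ = (Cᴴ*(C*(Aᴴ*A))).trace := by simp [Matrix.mul_assoc]
      _ = ((Cᴴ*(C*Aᴴ))*A).trace := by simp [Matrix.mul_assoc]
      _ = (A*(Cᴴ*(C*Aᴴ))).trace := Matrix.trace_mul_comm _ _
      _ = ((A*Cᴴ)*(C*Aᴴ)).trace := by simp [Matrix.mul_assoc]
  rw [h1]
  exact ip_self_nonneg _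

/-! ### Sum expansion over the cube -/

lemma sum_fin3fin2 {M : Type*} [AddCommMonoid M] (f : (Fin 3 → Fin 2) → M) :
    ∑ x : Fin 3 → Fin 2, f x = f ![0,0,0] + f ![0,0,1] + f ![0,1,0] + f ![0,1,1]
      + f ![1,0,0] + f ![1,0,1] + f ![1,1,0] + f ![1,1,1] := by
  rw [show (Finset.univ : Finset (Fin 3 → Fin 2)) =
      {![0,0,0],![0,0,1],![0,1,0],![0,1,1],![1,0,0],![1,0,1],![1,1,0],![1,1,1]} from by decide]
  rw [Finset.sum_insert (by decide), Finset.sum_insert (by decide),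
    Finset.sum_insert (by decide), Finset.sum_insert (by decide),
    Finset.sum_insert (by decide), Finset.sum_insert (by decide),
    Finset.sum_insert (by decide), Finset.sum_singleton]
  simp [add_assoc]

set_option maxHeartbeats 2000000 in
/-- Theorem 1(iii): if the average success probability of the variant of 3-bit
PMRAC attains the optimal value 1/2 + 1/√6, then Bob's observables are
uniquely determined: B_y = √(3/8)(N_y − M_y) for each y. -/
theorem optimal_determines_Bobs_observables
    (ρ : Mat4) (hρ : ρ.PosSemidef) (hρtr : ρ.trace = 1)
    (U : (Fin 3 → Fin 2) → Mat2)
    (hU : ∀ x, U x ∈ Matrix.unitaryGroup (Fin 2) ℂ)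
    (B : Fin 3 → Mat4)
    (hB : ∀ y, (B y).IsHermitian)
    (hB2 : ∀ y, B y * B y = 1)
    (hopt : ((24 : ℂ))⁻¹ * ∑ y : Fin 3, ∑ x : Fin 3 → Fin 2,
        ((ρst ρ U x) * ((2 : ℂ)⁻¹ • (1 + ((-1 : ℂ) ^ (x y).val) • B y))).trace
      = ((1 / 2 + 1 / Real.sqrt 6 : ℝ) : ℂ)) :
    ∀ y : Fin 3,
      B y = ((Real.sqrt (3 / 8) : ℝ) : ℂ) • (Nop (ρst ρ U) y - Mop (ρst ρ U) y) := by
  -- basic facts about the states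
  have hpsd : ∀ x, (ρst ρ U x).PosSemidef := fun x =>
    hρ.mul_mul_conjTranspose_same (U x ⊗ₖ (1 : Mat2))
  have hherm : ∀ x, (ρst ρ U x)ᴴ = ρst ρ U x := fun x => (hpsd x).1
  have htr : ∀ x, (ρst ρ U x).trace = 1 := by
    intro x
    unfold ρst
    rw [Matrix.trace_mul_cycle, kron_unitary (hU x), Matrix.one_mul, hρtr]
  have hpur : ∀ x, ip (ρst ρ U x) (ρst ρ U x) ≤ 1 := fun x => purity_le_one (hpsd x) (htr x)
  have hcross : ∀ x x', 0 ≤ ip (ρst ρ U x) (ρst ρ U x') := fun x x' =>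
    ip_nonneg_of_psd (hpsd x) (hpsd x')
  -- step 1 : the sum rewrites to a statement about ∑ tr(C_y B_y)
  have h2 : ∀ y : Fin 3, ∑ x : Fin 3 → Fin 2,
      ((-1 : ℂ) ^ (x y).val) * ((ρst ρ U x) * (B y)).trace
      = ((Nop (ρst ρ U) y - Mop (ρst ρ U) y) * (B y)).trace := by
    intro y
    fin_cases y <;>
    · rw [sum_fin3fin2 (f := fun x => ((-1 : ℂ) ^ (x _).val) * ((ρst ρ U x) * (B _)).trace)]
      norm_num [Nop, Mop, Matrix.sub_mul, Matrix.add_mul, Matrix.neg_mul,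
        Matrix.trace_sub, Matrix.trace_add, Matrix.trace_neg]
      ring
  have hterm : ∀ (y : Fin 3) (x : Fin 3 → Fin 2),
      ((ρst ρ U x) * ((2 : ℂ)⁻¹ • (1 + ((-1 : ℂ) ^ (x y).val) • B y))).trace
        = 2⁻¹ + 2⁻¹ * ((-1 : ℂ) ^ (x y).val) * ((ρst ρ U x) * (B y)).trace := by
    intro y x
    rw [Matrix.mul_smul, Matrix.trace_smul, Matrix.mul_add, Matrix.mul_one, Matrix.mul_smul,
      Matrix.trace_add, Matrix.trace_smul, htr x]
    simp
    ring
  have h1 : ∑ y : Fin 3, ∑ x : Fin 3 → Fin 2,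
      ((ρst ρ U x) * ((2 : ℂ)⁻¹ • (1 + ((-1 : ℂ) ^ (x y).val) • B y))).trace
      = 12 + 2⁻¹ * ∑ y : Fin 3, ((Nop (ρst ρ U) y - Mop (ρst ρ U) y) * (B y)).trace := by
    calc ∑ y : Fin 3, ∑ x : Fin 3 → Fin 2,
        ((ρst ρ U x) * ((2 : ℂ)⁻¹ • (1 + ((-1 : ℂ) ^ (x y).val) • B y))).trace
        = ∑ y : Fin 3, ∑ x : Fin 3 → Fin 2,
          (2⁻¹ + 2⁻¹ * ((-1 : ℂ) ^ (x y).val) * ((ρst ρ U x) * (B y)).trace) :=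
          Finset.sum_congr rfl fun y _ => Finset.sum_congr rfl fun x _ => hterm y x
      _ = ∑ y : Fin 3, (4 + 2⁻¹ * ∑ x : Fin 3 → Fin 2,
            ((-1 : ℂ) ^ (x y).val) * ((ρst ρ U x) * (B y)).trace) := by
          refine Finset.sum_congr rfl fun y _ => ?_
          rw [Finset.sum_add_distrib, Finset.sum_const, Finset.mul_sum]
          congr 1
          · norm_num
          · refine Finset.sum_congr rfl fun x _ => by ring
      _ = 12 + 2⁻¹ * ∑ y : Fin 3, ((Nop (ρst ρ U) y - Mop (ρst ρ U) y) * (B y)).trace := by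
          rw [Finset.sum_add_distrib, Finset.sum_const, Finset.mul_sum]
          congr 1
          · norm_num
          · refine Finset.sum_congr rfl fun y _ => by rw [h2 y]
  rw [h1] at hopt
  have h6pos : (0:ℝ) < Real.sqrt 6 := Real.sqrt_pos.mpr (by norm_num)
  have h6ne : ((Real.sqrt 6 : ℝ) : ℂ) ≠ 0 := Complex.ofReal_ne_zero.mpr (ne_of_gt h6pos)
  have h48 : ((1/2 + 1/Real.sqrt 6 : ℝ) : ℂ) * 24 - 12 = 2⁻¹ * ((48/Real.sqrt 6 : ℝ) : ℂ) := by
    push_cast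
    field_simp
    ring
  have hS : ∑ y : Fin 3, ((Nop (ρst ρ U) y - Mop (ρst ρ U) y) * (B y)).trace
      = ((48/Real.sqrt 6 : ℝ) : ℂ) := by
    linear_combination (48:ℂ) * hopt + 2 * h48
  -- now pass to the real inner product
  set C : Fin 3 → Mat4 := fun y => Nop (ρst ρ U) y - Mop (ρst ρ U) y with hCdef
  have hCherm : ∀ y, (C y)ᴴ = C y := by
    intro y
    fin_cases y <;>
      simp [hCdef, Nop, Mop, Matrix.conjTranspose_sub, Matrix.conjTranspose_add,
        Matrix.conjTranspose_neg, hherm _]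
  have hipCB : ∀ y, ip (C y) (B y) = (((C y) * (B y)).trace).re := by
    intro y
    unfold ip
    rw [hCherm y]
  have hrS : ip (C 0) (B 0) + ip (C 1) (B 1) + ip (C 2) (B 2) = 48 / Real.sqrt 6 := by
    rw [hipCB 0, hipCB 1, hipCB 2]
    have := congrArg Complex.re hS
    rw [Fin.sum_univ_three] at this
    simpa [Complex.re_sum] using this
  -- the Δ matrices
  set P : (Fin 3 → Fin 2) → Mat4 := ρst ρ U with hPdef
  set D1 : Mat4 := P ![0,0,0] - P ![1,1,1] with hD1
  set D2 : Mat4 := P ![0,0,1] - P ![1,1,0] with hD2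
  set D3 : Mat4 := P ![0,1,0] - P ![1,0,1] with hD3
  set D4 : Mat4 := P ![0,1,1] - P ![1,0,0] with hD4
  have hqD : ∀ Dk, (∃ a b, Dk = P a - P b) → ip Dk Dk ≤ 2 := by
    rintro Dk ⟨a, b, rfl⟩
    rw [ip_sub_left, ip_sub_right, ip_sub_right]
    have h1 := hpur a
    have h2 := hpur b
    have h3 := hcross a b
    have h4 := hcross b a
    linarith
  have hqD1 : ip D1 D1 ≤ 2 := hqD D1 ⟨_, _, hD1⟩
  have hqD2 : ip D2 D2 ≤ 2 := hqD D2 ⟨_, _, hD2⟩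
  have hqD3 : ip D3 D3 ≤ 2 := hqD D3 ⟨_, _, hD3⟩
  have hqD4 : ip D4 D4 ≤ 2 := hqD D4 ⟨_, _, hD4⟩
  -- C in terms of Δ
  have hC0 : C 0 = D1 + D2 + D3 + D4 := by
    simp only [hCdef, hD1, hD2, hD3, hD4, Nop, Mop, Matrix.cons_val_zero]
    abel
  have hC1 : C 1 = D1 + D2 - D3 - D4 := by
    simp only [hCdef, hD1, hD2, hD3, hD4, Nop, Mop, Matrix.cons_val_one, Matrix.head_cons, Matrix.cons_val_zero]
    abel
  have hC2 : C 2 = D1 - D2 + D3 - D4 := by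
    simp only [hCdef, hD1, hD2, hD3, hD4, Nop, Mop]
    simp only [Matrix.cons_val_two, Matrix.tail_cons, Matrix.head_cons]
    abel
  -- the E matrices
  set E1 : Mat4 := C 0 + C 1 + C 2 with hE1
  set E2 : Mat4 := C 0 + C 1 - C 2 with hE2
  set E3 : Mat4 := C 0 - C 1 + C 2 with hE3
  set E4 : Mat4 := C 0 - C 1 - C 2 with hE4
  set t : ℝ := ip (C 0) (C 0) + ip (C 1) (C 1) + ip (C 2) (C 2) with ht
  -- step A : 2 ip Dk Ek ≤ 4 ip Dk Dk + 4⁻¹ ip Ek Ek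
  have stepA : ∀ Dk Ek : Mat4, 2 * ip Dk Ek ≤ 4 * ip Dk Dk + 4⁻¹ * ip Ek Ek := by
    intro Dk Ek
    have h0 := ip_self_nonneg ((((2:ℝ)) : ℂ) • Dk - (((2⁻¹:ℝ)) : ℂ) • Ek)
    simp only [ip_sub_left, ip_sub_right, ip_smul_left, ip_smul_right, ip_comm Ek Dk] at h0
    linarith
  -- step B : ∑ ip Dk Ek = t
  have stepB : ip D1 E1 + ip D2 E2 + ip D3 E3 + ip D4 E4 = t := by
    rw [hE1, hE2, hE3, hE4, ht, hC0, hC1, hC2]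
    simp only [ip_add_left, ip_add_right, ip_sub_left, ip_sub_right]
    simp only [ip_comm D2 D1, ip_comm D3 D1, ip_comm D4 D1, ip_comm D3 D2, ip_comm D4 D2,
      ip_comm D4 D3]
    ring
  -- step C : ∑ ip Ek Ek = 4 t
  have stepC : ip E1 E1 + ip E2 E2 + ip E3 E3 + ip E4 E4 = 4 * t := by
    rw [hE1, hE2, hE3, hE4, ht, hC0, hC1, hC2]
    simp only [ip_add_left, ip_add_right, ip_sub_left, ip_sub_right]
    simp only [ip_comm D2 D1, ip_comm D3 D1, ip_comm D4 D1, ip_comm D3 D2, ip_comm D4 D2,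
      ip_comm D4 D3]
    ring
  -- the big bound
  have htle : t ≤ 32 := by
    have A1 := stepA D1 E1
    have A2 := stepA D2 E2
    have A3 := stepA D3 E3
    have A4 := stepA D4 E4
    linarith
  -- final : the Gram matrices of the differences vanish
  set α : ℝ := Real.sqrt (3/8) with hα
  have hα2 : α * α = 3/8 := Real.mul_self_sqrt (by norm_num)
  have h66 : Real.sqrt 6 * Real.sqrt 6 = 6 := Real.mul_self_sqrt (by norm_num)
  have hαkey : α * Real.sqrt 6 = 3/2 := by
    rw [hα, ← Real.sqrt_mul (by norm_num : (0:ℝ) ≤ 3/8)]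
    rw [show (3/8 * 6 : ℝ) = (3/2)^2 by norm_num, Real.sqrt_sq (by norm_num)]
  have h486 : (48:ℝ) / Real.sqrt 6 = 8 * Real.sqrt 6 := by
    rw [show (48:ℝ) = 8 * 6 by norm_num, mul_div_assoc, Real.div_sqrt]
  have hα48 : α * (48 / Real.sqrt 6) = 12 := by
    rw [h486]
    linear_combination 8 * hαkey
  have hipBB : ∀ y, ip (B y) (B y) = 4 := by
    intro y
    unfold ip
    rw [show (B y)ᴴ = B y from hB y, hB2 y, Matrix.trace_one]
    norm_num
  have hqG : ∀ y : Fin 3, ip ((α : ℂ) • C y - B y) ((α : ℂ) • C y - B y)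
      = (3/8) * ip (C y) (C y) - 2 * α * ip (C y) (B y) + 4 := by
    intro y
    simp only [ip_sub_left, ip_sub_right, ip_smul_left, ip_smul_right,
      ip_comm (B y) (C y), hipBB y]
    linear_combination ip (C y) (C y) * hα2
  have hsum0 : ip ((α : ℂ) • C 0 - B 0) ((α : ℂ) • C 0 - B 0)
      + ip ((α : ℂ) • C 1 - B 1) ((α : ℂ) • C 1 - B 1)
      + ip ((α : ℂ) • C 2 - B 2) ((α : ℂ) • C 2 - B 2) ≤ 0 := by
    rw [hqG 0, hqG 1, hqG 2]
    have e1 : (3/8) * ip (C 0) (C 0) + (3/8) * ip (C 1) (C 1) + (3/8) * ip (C 2) (C 2)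
        ≤ (3/8) * 32 := by
      rw [ht] at htle
      linarith
    have e2 : 2 * α * (ip (C 0) (B 0) + ip (C 1) (B 1) + ip (C 2) (B 2)) = 24 := by
      rw [hrS]
      linarith [hα48]
    nlinarith [e1, e2]
  have n0 := ip_self_nonneg ((α : ℂ) • C 0 - B 0)
  have n1 := ip_self_nonneg ((α : ℂ) • C 1 - B 1)
  have n2 := ip_self_nonneg ((α : ℂ) • C 2 - B 2)
  have z0 : (α : ℂ) • C 0 - B 0 = 0 := ip_self_eq_zero (le_antisymm (by linarith) n0)
  have z1 : (α : ℂ) • C 1 - B 1 = 0 := ip_self_eq_zero (le_antisymm (by linarith) n1)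
  have z2 : (α : ℂ) • C 2 - B 2 = 0 := ip_self_eq_zero (le_antisymm (by linarith) n2)
  intro y
  fin_cases y
  · exact (sub_eq_zero.mp z0).symm
  · exact (sub_eq_zero.mp z1).symm
  · exact (sub_eq_zero.mp z2).symm
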